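/- Let r, s be real with 0 < s, 2s < r, and r + 5s/3 < 1. Then the map F has a fixed point in the interior of the triangle T: there exists (x₁, x₂) with 0 < x₁ < x₂ < 1 and F(x₁, x₂) = (x₁, x₂). Such a fixed point corresponds to a 3-cyclic periodic solution of the cell-cycle flow, in which the three clusters exchange positions after one third of the period. -/
import Mathlib


/-- The piecewise-affine return-time map of the 3-cluster cell-cycle model,
defined branch by branch on the triangle `0 ≤ x₁ ≤ x₂ ≤ 1`
(the final `else` branch is never reached on the triangle). -/
noncomputable def Fmap (r s : ℝ) (p : ℝ × ℝ) : ℝ × ℝ :=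
  if p.2 < r - s then
    (1 - p.2, 1 - p.2 + p.1)
  else if p.1 ≤ s ∧ r - s ≤ p.2 ∧ p.2 < r - s + p.1 then
    (1 - 4*p.2/3 + (r - s)/3, 1 - 4*p.2/3 + p.1 + (r - s)/3)
  else if p.1 ≤ s ∧ r - s + p.1 ≤ p.2 ∧ p.2 < r then
    (1 - (5*p.2 - p.1)/3 + 2*(r - s)/3, 1 - (5*p.2 - 4*p.1)/3 + 2*(r - s)/3)
  else if p.1 ≤ s ∧ r ≤ p.2 ∧ p.2 < 1 - 5*s/3 + p.1/3 then
    (1 - p.2 + p.1/3 - 2*s/3, 1 - p.2 + 4*p.1/3 - 2*s/3)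
  else if p.1 ≤ s ∧ 1 - 5*s/3 + p.1/3 ≤ p.2 ∧ p.2 < 1 - 5*(s - p.1)/3 then
    (3*(1 - p.2)/4 + (p.1 - s)/4, 3*(1 - p.2)/4 + (5*p.1 - s)/4)
  else if p.1 ≤ s ∧ 1 - 5*(s - p.1)/3 ≤ p.2 ∧ p.2 ≤ 1 then
    (3*(1 - p.2)/5, p.1 + 3*(1 - p.2)/5)
  else if s < p.1 ∧ p.1 ≤ r - s ∧ r - s ≤ p.2 ∧ p.2 < r then
    (1 - 4*p.2/3 + (r - s)/3, 1 - 4*p.2/3 + p.1 + (r - s)/3)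
  else if s < p.1 ∧ p.1 ≤ r - s ∧ r ≤ p.2 ∧ p.2 < 1 - 4*s/3 then
    (1 - p.2 - s/3, 1 - p.2 + p.1 - s/3)
  else if s < p.1 ∧ p.1 ≤ r - 3*(1 - p.2)/4 ∧ 1 - 4*s/3 ≤ p.2 ∧ p.2 ≤ 1 then
    (3*(1 - p.2)/4, p.1 + 3*(1 - p.2)/4)
  else if r - s < p.1 ∧ r - s ≤ p.2 ∧ p.2 < r then
    (1 - 4*p.2/3 + (r - s)/3, 1 - 4*(p.2 - p.1)/3)
  else if r - s < p.1 ∧ p.1 ≤ r ∧ r ≤ p.2 ∧ p.2 ≤ 1 - 4*s/3 then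
    (1 - p.2 - s/3, 1 - p.2 + 4*p.1/3 - r/3)
  else if r - 3*(1 - p.2)/4 < p.1 ∧ p.1 ≤ r ∧ 1 - 4*s/3 ≤ p.2 ∧ p.2 ≤ 1 then
    (3*(1 - p.2)/4, 1 - p.2 + 4*p.1/3 - r/3)
  else if r < p.1 ∧ r ≤ p.2 ∧ p.2 ≤ 1 - 4*s/3 then
    (1 - p.2 - s/3, 1 - p.2 + p.1)
  else if r < p.1 ∧ 1 - 4*s/3 < p.2 ∧ p.2 ≤ 1 then
    (3*(1 - p.2)/4, 1 - p.2 + p.1)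
  else p


private lemma aux1 (r s a b : ℝ) (h : b < r - s) :
    Fmap r s (a, b) = (1 - b, 1 - b + a) := by
  unfold Fmap
  dsimp only
  rw [if_pos (show (b < r - s) by linarith)]

private lemma aux7 (r s a b : ℝ) (hs : 0 < s) (h2 : s < a) (h3 : a ≤ r - s)
    (h4 : r - s ≤ b) (h5 : b < r) :
    Fmap r s (a, b) = (1 - 4*b/3 + (r - s)/3, 1 - 4*b/3 + a + (r - s)/3) := by
  unfold Fmap
  dsimp only
  rw [if_neg (show ¬(b < r - s) by intro hh; linarith),
    if_neg (show ¬(a ≤ s ∧ r - s ≤ b ∧ b < r - s + a) by rintro ⟨hh0, hh1, hh2⟩; linarith),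
    if_neg (show ¬(a ≤ s ∧ r - s + a ≤ b ∧ b < r) by rintro ⟨hh0, hh1, hh2⟩; linarith),
    if_neg (show ¬(a ≤ s ∧ r ≤ b ∧ b < 1 - 5*s/3 + a/3) by rintro ⟨hh0, hh1, hh2⟩; linarith),
    if_neg (show ¬(a ≤ s ∧ 1 - 5*s/3 + a/3 ≤ b ∧ b < 1 - 5*(s - a)/3) by rintro ⟨hh0, hh1, hh2⟩; linarith),
    if_neg (show ¬(a ≤ s ∧ 1 - 5*(s - a)/3 ≤ b ∧ b ≤ 1) by rintro ⟨hh0, hh1, hh2⟩; linarith),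
    if_pos (show (s < a ∧ a ≤ r - s ∧ r - s ≤ b ∧ b < r) from ⟨by linarith, by linarith, by linarith, by linarith⟩)]

private lemma aux8 (r s a b : ℝ) (hs : 0 < s) (h2 : s < a) (h3 : a ≤ r - s)
    (h4 : r ≤ b) (h5 : b < 1 - 4*s/3) :
    Fmap r s (a, b) = (1 - b - s/3, 1 - b + a - s/3) := by
  unfold Fmap
  dsimp only
  rw [if_neg (show ¬(b < r - s) by intro hh; linarith),
    if_neg (show ¬(a ≤ s ∧ r - s ≤ b ∧ b < r - s + a) by rintro ⟨hh0, hh1, hh2⟩; linarith),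
    if_neg (show ¬(a ≤ s ∧ r - s + a ≤ b ∧ b < r) by rintro ⟨hh0, hh1, hh2⟩; linarith),
    if_neg (show ¬(a ≤ s ∧ r ≤ b ∧ b < 1 - 5*s/3 + a/3) by rintro ⟨hh0, hh1, hh2⟩; linarith),
    if_neg (show ¬(a ≤ s ∧ 1 - 5*s/3 + a/3 ≤ b ∧ b < 1 - 5*(s - a)/3) by rintro ⟨hh0, hh1, hh2⟩; linarith),
    if_neg (show ¬(a ≤ s ∧ 1 - 5*(s - a)/3 ≤ b ∧ b ≤ 1) by rintro ⟨hh0, hh1, hh2⟩; linarith),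
    if_neg (show ¬(s < a ∧ a ≤ r - s ∧ r - s ≤ b ∧ b < r) by rintro ⟨hh0, hh1, hh2, hh3⟩; linarith),
    if_pos (show (s < a ∧ a ≤ r - s ∧ r ≤ b ∧ b < 1 - 4*s/3) from ⟨by linarith, by linarith, by linarith, by linarith⟩)]

private lemma aux11 (r s a b : ℝ) (hs : 0 < s) (hrs : 2*s < r) (h2 : r - s < a)
    (h3 : a ≤ r) (h4 : r ≤ b) (h5 : b ≤ 1 - 4*s/3) :
    Fmap r s (a, b) = (1 - b - s/3, 1 - b + 4*a/3 - r/3) := by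
  unfold Fmap
  dsimp only
  rw [if_neg (show ¬(b < r - s) by intro hh; linarith),
    if_neg (show ¬(a ≤ s ∧ r - s ≤ b ∧ b < r - s + a) by rintro ⟨hh0, hh1, hh2⟩; linarith),
    if_neg (show ¬(a ≤ s ∧ r - s + a ≤ b ∧ b < r) by rintro ⟨hh0, hh1, hh2⟩; linarith),
    if_neg (show ¬(a ≤ s ∧ r ≤ b ∧ b < 1 - 5*s/3 + a/3) by rintro ⟨hh0, hh1, hh2⟩; linarith),
    if_neg (show ¬(a ≤ s ∧ 1 - 5*s/3 + a/3 ≤ b ∧ b < 1 - 5*(s - a)/3) by rintro ⟨hh0, hh1, hh2⟩; linarith),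
    if_neg (show ¬(a ≤ s ∧ 1 - 5*(s - a)/3 ≤ b ∧ b ≤ 1) by rintro ⟨hh0, hh1, hh2⟩; linarith),
    if_neg (show ¬(s < a ∧ a ≤ r - s ∧ r - s ≤ b ∧ b < r) by rintro ⟨hh0, hh1, hh2, hh3⟩; linarith),
    if_neg (show ¬(s < a ∧ a ≤ r - s ∧ r ≤ b ∧ b < 1 - 4*s/3) by rintro ⟨hh0, hh1, hh2, hh3⟩; linarith),
    if_neg (show ¬(s < a ∧ a ≤ r - 3*(1 - b)/4 ∧ 1 - 4*s/3 ≤ b ∧ b ≤ 1) by rintro ⟨hh0, hh1, hh2, hh3⟩; linarith),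
    if_neg (show ¬(r - s < a ∧ r - s ≤ b ∧ b < r) by rintro ⟨hh0, hh1, hh2⟩; linarith),
    if_pos (show (r - s < a ∧ a ≤ r ∧ r ≤ b ∧ b ≤ 1 - 4*s/3) from ⟨by linarith, by linarith, by linarith, by linarith⟩)]

private lemma aux13 (r s a b : ℝ) (hs : 0 < s) (h2 : s < a) (h3 : r < a)
    (h4 : r ≤ b) (h5 : b ≤ 1 - 4*s/3) :
    Fmap r s (a, b) = (1 - b - s/3, 1 - b + a) := by
  unfold Fmap
  dsimp only
  rw [if_neg (show ¬(b < r - s) by intro hh; linarith),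
    if_neg (show ¬(a ≤ s ∧ r - s ≤ b ∧ b < r - s + a) by rintro ⟨hh0, hh1, hh2⟩; linarith),
    if_neg (show ¬(a ≤ s ∧ r - s + a ≤ b ∧ b < r) by rintro ⟨hh0, hh1, hh2⟩; linarith),
    if_neg (show ¬(a ≤ s ∧ r ≤ b ∧ b < 1 - 5*s/3 + a/3) by rintro ⟨hh0, hh1, hh2⟩; linarith),
    if_neg (show ¬(a ≤ s ∧ 1 - 5*s/3 + a/3 ≤ b ∧ b < 1 - 5*(s - a)/3) by rintro ⟨hh0, hh1, hh2⟩; linarith),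
    if_neg (show ¬(a ≤ s ∧ 1 - 5*(s - a)/3 ≤ b ∧ b ≤ 1) by rintro ⟨hh0, hh1, hh2⟩; linarith),
    if_neg (show ¬(s < a ∧ a ≤ r - s ∧ r - s ≤ b ∧ b < r) by rintro ⟨hh0, hh1, hh2, hh3⟩; linarith),
    if_neg (show ¬(s < a ∧ a ≤ r - s ∧ r ≤ b ∧ b < 1 - 4*s/3) by rintro ⟨hh0, hh1, hh2, hh3⟩; linarith),
    if_neg (show ¬(s < a ∧ a ≤ r - 3*(1 - b)/4 ∧ 1 - 4*s/3 ≤ b ∧ b ≤ 1) by rintro ⟨hh0, hh1, hh2, hh3⟩; linarith),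
    if_neg (show ¬(r - s < a ∧ r - s ≤ b ∧ b < r) by rintro ⟨hh0, hh1, hh2⟩; linarith),
    if_neg (show ¬(r - s < a ∧ a ≤ r ∧ r ≤ b ∧ b ≤ 1 - 4*s/3) by rintro ⟨hh0, hh1, hh2, hh3⟩; linarith),
    if_neg (show ¬(r - 3*(1 - b)/4 < a ∧ a ≤ r ∧ 1 - 4*s/3 ≤ b ∧ b ≤ 1) by rintro ⟨hh0, hh1, hh2, hh3⟩; linarith),
    if_pos (show (r < a ∧ r ≤ b ∧ b ≤ 1 - 4*s/3) from ⟨by linarith, by linarith, by linarith⟩)]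


/-- The triangle `0 ≤ x₁ ≤ x₂ ≤ 1`. -/
def Triangle : Set (ℝ × ℝ) := {p | 0 ≤ p.1 ∧ p.1 ≤ p.2 ∧ p.2 ≤ 1}

theorem Fmap_interior_fixed_point (r s : ℝ)
    (hs : 0 < s) (hrs : 2*s < r) (h1 : r + 5*s/3 < 1) :
    ∃ p : ℝ × ℝ, 0 < p.1 ∧ p.1 < p.2 ∧ p.2 < 1 ∧ Fmap r s p = p := by
  have hs3 : 11*s < 3 := by linarith
  rcases lt_or_ge (9*r) (3-2*s) with hc | hc
  · refine ⟨((3-2*s)/9, (6-s)/9), by dsimp only; linarith, by dsimp only; linarith,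
      by dsimp only; linarith, ?_⟩
    rw [aux13 r s _ _ hs (by linarith) (by linarith) (by linarith) (by linarith)]
    refine Prod.ext ?_ ?_ <;> dsimp only <;> ring
  rcases lt_or_ge (9*r) (3+8*s) with hc2 | hc2
  · refine ⟨((3+r-2*s)/10, (21-3*r-4*s)/30), by dsimp only; linarith, by dsimp only; linarith,
      by dsimp only; linarith, ?_⟩
    rw [aux11 r s _ _ hs hrs (by linarith) (by linarith) (by linarith) (by linarith)]
    refine Prod.ext ?_ ?_ <;> dsimp only <;> ring
  rcases le_or_gt (9*r) (6-2*s) with hc3 | hc3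
  · refine ⟨((3-s)/9, 2*((3-s)/9)), by dsimp only; linarith, by dsimp only; linarith,
      by dsimp only; linarith, ?_⟩
    rw [aux8 r s _ _ hs (by linarith) (by linarith) (by linarith) (by linarith)]
    refine Prod.ext ?_ ?_ <;> dsimp only <;> ring
  rcases le_or_gt (9*r) (6+9*s) with hc4 | hc4
  · refine ⟨((3+r-s)/11, 2*((3+r-s)/11)), by dsimp only; linarith, by dsimp only; linarith,
      by dsimp only; linarith, ?_⟩
    rw [aux7 r s _ _ hs (by linarith) (by linarith) (by linarith) (by linarith)]
    refine Prod.ext ?_ ?_ <;> dsimp only <;> ring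
  · refine ⟨((1:ℝ)/3, (2:ℝ)/3), by norm_num, by norm_num, by norm_num, ?_⟩
    rw [aux1 r s _ _ (by linarith)]
    refine Prod.ext ?_ ?_ <;> dsimp only <;> ring
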